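/- Define linear orders by U₀ = ℝ and, recursively, U_{n+1} = ℤ ×ₗ WithTop Uₙ. Then for every natural number n, the linear order Uₙ is order-isomorphic to ℝ. -/

import Mathlib

open Set

/-- Value map on `WithTop α`: `⊤ ↦ 1`, `a ↦ e a ∈ (-1,1)`. -/
noncomputable def topVal {α : Type*} [LinearOrder α] (e : α ≃o ℝ) : WithTop α → ℝ
  | ⊤ => 1
  | (a : α) => (orderIsoIooNegOneOne ℝ (e a) : ℝ)

lemma topVal_mem {α : Type*} [LinearOrder α] (e : α ≃o ℝ) (x : WithTop α) :
    topVal e x ∈ Ioc (-1 : ℝ) 1 := by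
  cases x with
  | top =>
    show (-1 : ℝ) < topVal e ⊤ ∧ topVal e ⊤ ≤ 1
    simp only [topVal]
    norm_num
  | coe a =>
    have h := (orderIsoIooNegOneOne ℝ (e a)).2
    exact ⟨h.1, h.2.le⟩

lemma topVal_strictMono {α : Type*} [LinearOrder α] (e : α ≃o ℝ) :
    StrictMono (topVal e) := by
  intro x y hxy
  cases y with
  | top =>
    cases x with
    | top => exact absurd hxy (lt_irrefl _)
    | coe a => exact (orderIsoIooNegOneOne ℝ (e a)).2.2
  | coe b =>
    cases x with
    | top => exact absurd hxy (by simp)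
    | coe a =>
      have : a < b := by exact_mod_cast hxy
      exact (orderIsoIooNegOneOne ℝ).strictMono (e.strictMono this)

noncomputable def lexFun {α : Type*} [LinearOrder α] (e : α ≃o ℝ) :
    ℤ ×ₗ WithTop α → ℝ :=
  fun p => 2 * ((ofLex p).1 : ℝ) + topVal e (ofLex p).2

lemma lexFun_strictMono {α : Type*} [LinearOrder α] (e : α ≃o ℝ) :
    StrictMono (lexFun e) := by
  intro p q hpq
  have h := Prod.Lex.lt_iff.1 hpq
  unfold lexFun
  rcases h with h | ⟨h1, h2⟩
  · have hk : ((ofLex p).1 : ℝ) + 1 ≤ (ofLex q).1 := by exact_mod_cast h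
    have hx := (topVal_mem e (ofLex p).2).2
    have hy := (topVal_mem e (ofLex q).2).1
    nlinarith
  · rw [h1]
    have := topVal_strictMono e h2
    linarith

lemma lexFun_surjective {α : Type*} [LinearOrder α] (e : α ≃o ℝ) :
    Function.Surjective (lexFun e) := by
  intro y
  set n : ℤ := ⌈(y - 1) / 2⌉ with hn
  have h1 : (y - 1) / 2 ≤ n := Int.le_ceil _
  have h2 : (n : ℝ) < (y - 1) / 2 + 1 := Int.ceil_lt_add_one _
  set t : ℝ := y - 2 * n with ht
  have htu : t ≤ 1 := by rw [ht]; linarith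
  have htl : -1 < t := by rw [ht]; linarith
  rcases eq_or_lt_of_le htu with heq | hlt
  · refine ⟨toLex (n, ⊤), ?_⟩
    show 2 * (n : ℝ) + topVal e (ofLex (toLex ((n : ℤ), (⊤ : WithTop α)))).2 = y
    simp only [ofLex_toLex, topVal]
    rw [← heq]; rw [ht]; ring
  · refine ⟨toLex (n, (e.symm ((orderIsoIooNegOneOne ℝ).symm ⟨t, htl, hlt⟩) : α)), ?_⟩
    show 2 * (n : ℝ) + topVal e _ = y
    have : topVal e ((e.symm ((orderIsoIooNegOneOne ℝ).symm ⟨t, htl, hlt⟩) : α) : WithTop α)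
        = t := by
      show ((orderIsoIooNegOneOne ℝ (e (e.symm _))) : ℝ) = t
      rw [e.apply_symm_apply, (orderIsoIooNegOneOne ℝ).apply_symm_apply]
    simp only [ofLex_toLex]
    rw [this, ht]; ring
/-- Key step: if `α ≃o ℝ`, then `ℤ ×ₗ WithTop α ≃o ℝ`. -/
noncomputable def lexStep {α : Type*} [LinearOrder α] (e : α ≃o ℝ) :
    (ℤ ×ₗ WithTop α) ≃o ℝ :=
  StrictMono.orderIsoOfSurjective _ (lexFun_strictMono e) (lexFun_surjective e)

/-- The underlying linear orders of the basic group-like uninorms: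
`U 0 = ℝ` and `U (n+1) = ℤ ×ₗ WithTop (U n)`. -/
def basicU : ℕ → Type
  | 0 => ℝ
  | n + 1 => ℤ ×ₗ WithTop (basicU n)

noncomputable instance basicULinearOrder : ∀ n, LinearOrder (basicU n)
  | 0 => inferInstanceAs (LinearOrder ℝ)
  | n + 1 =>
      letI := basicULinearOrder n
      (inferInstance : LinearOrder (ℤ ×ₗ WithTop (basicU n)))

/-- every `basicU n` is order-isomorphic to `ℝ`. -/
theorem stmt_14 : ∀ n : ℕ, Nonempty (basicU n ≃o ℝ) := by
  intro n
  induction n with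
  | zero => exact ⟨OrderIso.refl ℝ⟩
  | succ n ih =>
    obtain ⟨e⟩ := ih
    exact ⟨lexStep e⟩
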